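/- The sextic polynomial η⁶ - 2η⁵ - 4η⁴ + 12η³ - 14η² + 8η - 4 is irreducible over ℚ and has exactly two real roots. -/

import Mathlib

open Polynomial Set

abbrev K := ZMod 29
instance : Fact (Nat.Prime 29) := ⟨by norm_num⟩

noncomputable def f29 : K[X] := X^6 - 2*X^5 - 4*X^4 + 12*X^3 - 14*X^2 + 8*X - 4

lemma f29_natDegree : f29.natDegree = 6 := by unfold f29; compute_degree!
lemma f29_monic : f29.Monic := by unfold f29; monicity!

lemma dec1 : ∀ x : K, x^6 - 2*x^5 - 4*x^4 + 12*x^3 - 14*x^2 + 8*x - 4 ≠ 0 := by decide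

lemma key2 (a b : K) : f29 = (X^2 + C a * X + C b) *
    (X^4 + C (-a-2)*X^3 + C (a^2+2*a-b-4)*X^2 + C (-a^3-2*a^2+2*a*b+4*a+2*b+12)*X
      + C (a^4+2*a^3-3*a^2*b-4*a^2-4*a*b-12*a+b^2+4*b-14))
    + (C (-a^5 - 2*a^4 + 4*a^3*b + 4*a^3 + 6*a^2*b + 12*a^2 - 3*a*b^2 - 8*a*b + 14*a - 2*b^2 - 12*b + 8) * X
      + C (-(a^4*b) - 2*a^3*b + 3*a^2*b^2 + 4*a^2*b + 4*a*b^2 + 12*a*b - b^3 - 4*b^2 + 14*b - 4)) := by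
  unfold f29
  simp only [map_add, map_mul, map_sub, map_neg, map_pow, map_ofNat, map_one]
  ring

lemma key3 (a b c : K) : f29 = (X^3 + C a * X^2 + C b * X + C c) *
    (X^3 + C (-a-2)*X^2 + C (a^2+2*a-b-4)*X + C (-a^3-2*a^2+2*a*b+4*a+2*b-c+12))
    + (C (a^4 + 2*a^3 - 3*a^2*b - 4*a^2 - 4*a*b + 2*a*c - 12*a + b^2 + 4*b + 2*c - 14) * X^2
      + C (a^3*b + 2*a^2*b - a^2*c - 2*a*b^2 - 4*a*b - 2*a*c - 2*b^2 + 2*b*c - 12*b + 4*c + 8) * X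
      + C (a^3*c + 2*a^2*c - 2*a*b*c - 4*a*c - 2*b*c + c^2 - 12*c - 4)) := by
  unfold f29
  simp only [map_add, map_mul, map_sub, map_neg, map_pow, map_ofNat, map_one]
  ring

lemma dec2 : ∀ a b : K,
    -a^5 - 2*a^4 + 4*a^3*b + 4*a^3 + 6*a^2*b + 12*a^2 - 3*a*b^2 - 8*a*b + 14*a - 2*b^2 - 12*b + 8 ≠ 0 ∨
    -(a^4*b) - 2*a^3*b + 3*a^2*b^2 + 4*a^2*b + 4*a*b^2 + 12*a*b - b^3 - 4*b^2 + 14*b - 4 ≠ 0 := by decide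

set_option maxHeartbeats 4000000 in
lemma dec3 : ∀ a b c : K,
    a^4 + 2*a^3 - 3*a^2*b - 4*a^2 - 4*a*b + 2*a*c - 12*a + b^2 + 4*b + 2*c - 14 ≠ 0 ∨
    a^3*b + 2*a^2*b - a^2*c - 2*a*b^2 - 4*a*b - 2*a*c - 2*b^2 + 2*b*c - 12*b + 4*c + 8 ≠ 0 ∨
    a^3*c + 2*a^2*c - 2*a*b*c - 4*a*c - 2*b*c + c^2 - 12*c - 4 ≠ 0 := by decide

lemma no_deg1 (g : K[X]) (hm : g.Monic) (hd : g.natDegree = 1) : ¬ g ∣ f29 := by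
  intro hdvd
  have hg : g = X - C (-(g.coeff 0)) := by
    rw [map_neg, sub_neg_eq_add]; exact hm.eq_X_add_C hd
  rw [hg, dvd_iff_isRoot] at hdvd
  have := dec1 (-(g.coeff 0))
  apply this
  simpa [f29, IsRoot] using hdvd

lemma monic_eq_deg2 (g : K[X]) (hm : g.Monic) (hd : g.natDegree = 2) :
    g = X^2 + C (g.coeff 1) * X + C (g.coeff 0) := by
  have h := g.as_sum_range' 3 (by omega)
  have hc2 : g.coeff 2 = 1 := by have := hm.coeff_natDegree; rwa [hd] at this
  rw [h]
  simp [Finset.sum_range_succ, ← C_mul_X_pow_eq_monomial, hc2]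
  ring

lemma monic_eq_deg3 (g : K[X]) (hm : g.Monic) (hd : g.natDegree = 3) :
    g = X^3 + C (g.coeff 2) * X^2 + C (g.coeff 1) * X + C (g.coeff 0) := by
  have h := g.as_sum_range' 4 (by omega)
  have hc3 : g.coeff 3 = 1 := by have := hm.coeff_natDegree; rwa [hd] at this
  rw [h]
  simp [Finset.sum_range_succ, ← C_mul_X_pow_eq_monomial, hc3]
  ring

lemma no_deg2 (g : K[X]) (hm : g.Monic) (hd : g.natDegree = 2) : ¬ g ∣ f29 := by
  intro hdvd
  set a := g.coeff 1
  set b := g.coeff 0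
  have hg := monic_eq_deg2 g hm hd
  set r1 := -a^5 - 2*a^4 + 4*a^3*b + 4*a^3 + 6*a^2*b + 12*a^2 - 3*a*b^2 - 8*a*b + 14*a - 2*b^2 - 12*b + 8 with hr1
  set r0 := -(a^4*b) - 2*a^3*b + 3*a^2*b^2 + 4*a^2*b + 4*a*b^2 + 12*a*b - b^3 - 4*b^2 + 14*b - 4 with hr0
  have hrem : g ∣ (C r1 * X + C r0) := by
    have h2 := key2 a b
    have : C r1 * X + C r0 = f29 - g * (X^4 + C (-a-2)*X^3 + C (a^2+2*a-b-4)*X^2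
        + C (-a^3-2*a^2+2*a*b+4*a+2*b+12)*X
        + C (a^4+2*a^3-3*a^2*b-4*a^2-4*a*b-12*a+b^2+4*b-14)) := by
      rw [← hg] at h2; rw [h2]; ring
    rw [this]
    exact dvd_sub hdvd (Dvd.intro _ rfl)
  have hdg : g.degree = 2 := by rw [degree_eq_natDegree hm.ne_zero, hd]; rfl
  have hR : C r1 * X + C r0 = 0 := by
    refine eq_zero_of_dvd_of_degree_lt hrem ?_
    rw [hdg]
    exact lt_of_le_of_lt (degree_linear_le) (by decide)
  have h1 : r1 = 0 := by
    have := congrArg (fun p => Polynomial.coeff p 1) hR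
    simpa using this
  have h0 : r0 = 0 := by
    have := congrArg (fun p => Polynomial.coeff p 0) hR
    simpa using this
  rcases dec2 a b with h | h <;> [exact h h1; exact h h0]

lemma no_deg3 (g : K[X]) (hm : g.Monic) (hd : g.natDegree = 3) : ¬ g ∣ f29 := by
  intro hdvd
  set a := g.coeff 2
  set b := g.coeff 1
  set c := g.coeff 0
  have hg := monic_eq_deg3 g hm hd
  set r2 := a^4 + 2*a^3 - 3*a^2*b - 4*a^2 - 4*a*b + 2*a*c - 12*a + b^2 + 4*b + 2*c - 14 with hr2
  set r1 := a^3*b + 2*a^2*b - a^2*c - 2*a*b^2 - 4*a*b - 2*a*c - 2*b^2 + 2*b*c - 12*b + 4*c + 8 with hr1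
  set r0 := a^3*c + 2*a^2*c - 2*a*b*c - 4*a*c - 2*b*c + c^2 - 12*c - 4 with hr0
  have hrem : g ∣ (C r2 * X^2 + C r1 * X + C r0) := by
    have h3 := key3 a b c
    have : C r2 * X^2 + C r1 * X + C r0 = f29 - g * (X^3 + C (-a-2)*X^2 + C (a^2+2*a-b-4)*X
        + C (-a^3-2*a^2+2*a*b+4*a+2*b-c+12)) := by
      rw [← hg] at h3; rw [h3]; ring
    rw [this]
    exact dvd_sub hdvd (Dvd.intro _ rfl)
  have hdg : g.degree = 3 := by rw [degree_eq_natDegree hm.ne_zero, hd]; rfl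
  have hR : C r2 * X^2 + C r1 * X + C r0 = 0 := by
    refine eq_zero_of_dvd_of_degree_lt hrem ?_
    rw [hdg]
    exact lt_of_le_of_lt (degree_quadratic_le) (by decide)
  have h2 : r2 = 0 := by
    have := congrArg (fun p => Polynomial.coeff p 2) hR
    simpa using this
  have h1 : r1 = 0 := by
    have := congrArg (fun p => Polynomial.coeff p 1) hR
    simpa using this
  have h0 : r0 = 0 := by
    have := congrArg (fun p => Polynomial.coeff p 0) hR
    simpa using this
  rcases dec3 a b c with h | h | h <;> [exact h h2; exact h h1; exact h h0]

lemma irr29 : Irreducible f29 := by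
  rw [irreducible_iff]
  constructor
  · intro h
    rw [Polynomial.isUnit_iff_degree_eq_zero] at h
    have : f29.degree = 6 := by rw [degree_eq_natDegree f29_monic.ne_zero, f29_natDegree]; rfl
    rw [this] at h; exact absurd h (by decide)
  · intro g h heq
    by_contra hcon
    push_neg at hcon
    obtain ⟨hgu, hhu⟩ := hcon
    have hne : f29 ≠ 0 := f29_monic.ne_zero
    have hg0 : g ≠ 0 := by rintro rfl; simp at heq; exact hne heq
    have hh0 : h ≠ 0 := by rintro rfl; simp at heq; exact hne heq
    have hsum : g.natDegree + h.natDegree = 6 := by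
      rw [← natDegree_mul hg0 hh0, ← heq, f29_natDegree]
    have hg1 : 1 ≤ g.natDegree := by
      by_contra hle
      push_neg at hle
      interval_cases hgd : g.natDegree
      · obtain ⟨c, hc⟩ := natDegree_eq_zero.mp hgd
        exact hgu (hc ▸ isUnit_C.mpr (isUnit_iff_ne_zero.mpr (by rintro rfl; simp at hc; exact hg0 hc.symm)))
    have hh1 : 1 ≤ h.natDegree := by
      by_contra hle
      push_neg at hle
      interval_cases hhd : h.natDegree
      · obtain ⟨c, hc⟩ := natDegree_eq_zero.mp hhd
        exact hhu (hc ▸ isUnit_C.mpr (isUnit_iff_ne_zero.mpr (by rintro rfl; simp at hc; exact hh0 hc.symm)))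
    obtain ⟨p, hp0, hpdvd, hp1, hp3⟩ :
        ∃ p : K[X], p ≠ 0 ∧ p ∣ f29 ∧ 1 ≤ p.natDegree ∧ p.natDegree ≤ 3 := by
      rcases le_or_gt g.natDegree 3 with h3 | h3
      · exact ⟨g, hg0, Dvd.intro h heq.symm, hg1, h3⟩
      · exact ⟨h, hh0, Dvd.intro_left g heq.symm, hh1, by omega⟩
    set q : K[X] := p * C (p.leadingCoeff)⁻¹ with hq
    have hqm : q.Monic := monic_mul_leadingCoeff_inv hp0
    have hqp : q ∣ p := Dvd.intro (C p.leadingCoeff) (by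
      rw [hq, mul_assoc, ← C_mul, inv_mul_cancel₀ (leadingCoeff_ne_zero.mpr hp0), C_1, mul_one])
    have hqdvd : q ∣ f29 := hqp.trans hpdvd
    have hqd : q.natDegree = p.natDegree :=
      natDegree_eq_of_degree_eq (degree_mul_leadingCoeff_inv p hp0)
    have hcase : q.natDegree = 1 ∨ q.natDegree = 2 ∨ q.natDegree = 3 := by omega
    rcases hcase with h1 | h2 | h3
    · exact no_deg1 q hqm h1 hqdvd
    · exact no_deg2 q hqm h2 hqdvd
    · exact no_deg3 q hqm h3 hqdvd

noncomputable def fZ : ℤ[X] := X^6 - 2*X^5 - 4*X^4 + 12*X^3 - 14*X^2 + 8*X - 4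

lemma fZ_monic : fZ.Monic := by unfold fZ; monicity!

lemma irrQ : Irreducible ((X : ℚ[X]) ^ 6 - 2 * X ^ 5 - 4 * X ^ 4 + 12 * X ^ 3 - 14 * X ^ 2 + 8 * X - 4) := by
  have hmap29 : fZ.map (Int.castRingHom K) = f29 := by
    unfold fZ f29
    simp [Polynomial.map_sub, Polynomial.map_add, Polynomial.map_mul, Polynomial.map_pow,
      Polynomial.map_ofNat]
  have hZ : Irreducible fZ :=
    fZ_monic.irreducible_of_irreducible_map _ _ (hmap29 ▸ irr29)
  have hmapQ : fZ.map (Int.castRingHom ℚ) =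
      (X : ℚ[X]) ^ 6 - 2 * X ^ 5 - 4 * X ^ 4 + 12 * X ^ 3 - 14 * X ^ 2 + 8 * X - 4 := by
    unfold fZ
    simp [Polynomial.map_sub, Polynomial.map_add, Polynomial.map_mul, Polynomial.map_pow,
      Polynomial.map_ofNat]
  exact hmapQ ▸ (Polynomial.IsPrimitive.Int.irreducible_iff_irreducible_map_cast fZ_monic.isPrimitive).mp hZ

noncomputable def F : ℝ → ℝ := fun x => x^6 - 2*x^5 - 4*x^4 + 12*x^3 - 14*x^2 + 8*x - 4

lemma Fderiv : ∀ x : ℝ, HasDerivAt F (6*x^5 - 10*x^4 - 16*x^3 + 36*x^2 - 28*x + 8) x := by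
  intro x
  have h := ((((((hasDerivAt_pow 6 x).sub ((hasDerivAt_pow 5 x).const_mul 2)).sub
      ((hasDerivAt_pow 4 x).const_mul 4)).add ((hasDerivAt_pow 3 x).const_mul 12)).sub
      ((hasDerivAt_pow 2 x).const_mul 14)).add ((hasDerivAt_id x).const_mul 8)).sub_const 4
  convert h using 1
  · rfl
  · rfl
  · funext y; simp [F]
  · push_cast; ring

lemma Fcont : Continuous F := by
  unfold F; continuity

lemma Fderiv_neg : ∀ x : ℝ, x < -2 → deriv F x < 0 := by
  intro x hx
  rw [(Fderiv x).deriv]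
  have ht : 0 < -2 - x := by linarith
  set t := -2 - x with hts
  have hxt : x = -2 - t := by rw [hts]; ring
  rw [hxt]
  have : 6*(-2-t)^5 - 10*(-2-t)^4 - 16*(-2-t)^3 + 36*(-2-t)^2 - 28*(-2-t) + 8
      = -(6*t^5 + 70*t^4 + 304*t^3 + 588*t^2 + 436*t + 16) := by ring
  rw [this]
  have : 0 < 6*t^5 + 70*t^4 + 304*t^3 + 588*t^2 + 436*t + 16 := by positivity
  linarith

lemma Fderiv_pos : ∀ x : ℝ, 2 < x → 0 < deriv F x := by
  intro x hx
  rw [(Fderiv x).deriv]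
  have ht : 0 < x - 2 := by linarith
  set t := x - 2 with hts
  have hxt : x = 2 + t := by rw [hts]; ring
  rw [hxt]
  have : 6*(2+t)^5 - 10*(2+t)^4 - 16*(2+t)^3 + 36*(2+t)^2 - 28*(2+t) + 8
      = 6*t^5 + 50*t^4 + 144*t^3 + 180*t^2 + 84*t := by ring
  rw [this]
  positivity

lemma Fanti : StrictAntiOn F (Iic (-2)) := by
  apply strictAntiOn_of_deriv_neg (convex_Iic _) Fcont.continuousOn
  intro x hx
  rw [interior_Iic] at hx
  exact Fderiv_neg x hx

lemma Fmono : StrictMonoOn F (Ici 2) := by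
  apply strictMonoOn_of_deriv_pos (convex_Ici _) Fcont.continuousOn
  intro x hx
  rw [interior_Ici] at hx
  exact Fderiv_pos x hx

lemma Fmid : ∀ x : ℝ, -2 ≤ x → x ≤ 2 → F x < 0 := by
  intro x h1 h2
  unfold F
  nlinarith [sq_nonneg (x^2 - x), sq_nonneg (x^2 + x - 2), sq_nonneg (x - 1), sq_nonneg x,
    mul_nonneg (by linarith : (0:ℝ) ≤ x + 2) (by linarith : (0:ℝ) ≤ 2 - x),
    mul_nonneg (mul_nonneg (by linarith : (0:ℝ) ≤ x + 2) (by linarith : (0:ℝ) ≤ 2 - x)) (sq_nonneg x),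
    mul_nonneg (mul_nonneg (by linarith : (0:ℝ) ≤ x + 2) (by linarith : (0:ℝ) ≤ 2 - x)) (sq_nonneg (x-1)),
    mul_nonneg (mul_nonneg (by linarith : (0:ℝ) ≤ x + 2) (by linarith : (0:ℝ) ≤ 2 - x)) (sq_nonneg (x^2-x)),
    sq_nonneg (x^3 - x^2 - 2*x + 2)]

lemma two_roots : {x : ℝ | x^6 - 2*x^5 - 4*x^4 + 12*x^3 - 14*x^2 + 8*x - 4 = 0}.ncard = 2 := by
  have hset : {x : ℝ | x^6 - 2*x^5 - 4*x^4 + 12*x^3 - 14*x^2 + 8*x - 4 = 0} = {x : ℝ | F x = 0} := rfl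
  rw [hset]
  have hm3 : F (-3) = 413 := by norm_num [F]
  have hm2 : F (-2) = -108 := by norm_num [F]
  have h2 : F 2 = -12 := by norm_num [F]
  have h3 : F 3 = 137 := by norm_num [F]
  obtain ⟨a, haI, haF⟩ : ∃ a ∈ Ioo (-3 : ℝ) (-2), F a = 0 := by
    have := intermediate_value_Ioo' (by norm_num : (-3:ℝ) ≤ -2) Fcont.continuousOn
      (by rw [hm2, hm3]; constructor <;> norm_num : (0:ℝ) ∈ Ioo (F (-2)) (F (-3)))
    obtain ⟨a, ha, hfa⟩ := this
    exact ⟨a, ha, hfa⟩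
  obtain ⟨b, hbI, hbF⟩ : ∃ b ∈ Ioo (2 : ℝ) 3, F b = 0 := by
    have := intermediate_value_Ioo (by norm_num : (2:ℝ) ≤ 3) Fcont.continuousOn
      (by rw [h2, h3]; constructor <;> norm_num : (0:ℝ) ∈ Ioo (F 2) (F 3))
    obtain ⟨b, hb, hfb⟩ := this
    exact ⟨b, hb, hfb⟩
  have hab : a ≠ b := by
    intro h; have h1 := haI.2; have h2 := hbI.1; rw [h] at h1; linarith
  have hseteq : {x : ℝ | F x = 0} = {a, b} := by
    ext x
    simp only [mem_setOf_eq, mem_insert_iff, mem_singleton_iff]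
    constructor
    · intro hx
      have hnot : ¬ (-2 ≤ x ∧ x ≤ 2) := by
        rintro ⟨h1', h2'⟩
        have := Fmid x h1' h2'
        linarith [hx]
      push_neg at hnot
      rcases lt_or_ge x (-2) with hlt | hge
      · left
        exact Fanti.injOn (le_of_lt hlt) (le_of_lt haI.2) (by rw [hx, haF])
      · right
        have hgt : 2 < x := by
          rcases le_or_gt x 2 with h | h
          · exact absurd (hnot hge) (not_lt.mpr h)
          · exact h
        exact Fmono.injOn (le_of_lt hgt) (le_of_lt hbI.1) (by rw [hx, hbF])
    · rintro (rfl | rfl)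
      · exact haF
      · exact hbF
  rw [hseteq]
  exact Set.ncard_pair hab

/-- The sextic `η⁶ - 2η⁵ - 4η⁴ + 12η³ - 14η² + 8η - 4` is irreducible over `ℚ`
and has exactly two real roots. -/
theorem stmt_19 :
    Irreducible ((X : ℚ[X]) ^ 6 - 2 * X ^ 5 - 4 * X ^ 4 + 12 * X ^ 3 - 14 * X ^ 2 + 8 * X - 4) ∧
      {x : ℝ | x ^ 6 - 2 * x ^ 5 - 4 * x ^ 4 + 12 * x ^ 3 - 14 * x ^ 2 + 8 * x - 4 = 0}.ncard
        = 2 := ⟨irrQ, two_roots⟩
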